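/- Let μ : 𝔻 → ℂ be a measurable, essentially bounded function on the unit disk, and for z ∈ 𝔻* define φ(z) = −(6/π)·∫_𝔻 μ(w)/(w − z)⁴ dA(w). Then for every z ∈ 𝔻*, |φ(z)|²·(|z|² − 1)³ ≤ (36/π)·(|z|² − 1)·∫_𝔻 |μ(w)|²/|w − z|⁴ dA(w). -/

import Mathlib

open MeasureTheory Complex Metric Set


lemma my_cauchy_schwarz {α : Type*} [MeasurableSpace α] (ν : Measure α) (f g : α → ℝ)
    (hfm : AEStronglyMeasurable f ν) (hgm : AEStronglyMeasurable g ν)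
    (hf0 : ∀ x, 0 ≤ f x) (hg0 : ∀ x, 0 ≤ g x)
    (hf2 : Integrable (fun x => f x ^ 2) ν) (hg2 : Integrable (fun x => g x ^ 2) ν) :
    (∫ x, f x * g x ∂ν) ^ 2 ≤ (∫ x, f x ^ 2 ∂ν) * (∫ x, g x ^ 2 ∂ν) := by
  set A := ∫ x, f x ^ 2 ∂ν with hA
  set B := ∫ x, g x ^ 2 ∂ν with hB
  set C := ∫ x, f x * g x ∂ν with hC
  have hfg : Integrable (fun x => f x * g x) ν := by
    refine Integrable.mono' ((hf2.add hg2).div_const 2) (hfm.mul hgm) ?_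
    filter_upwards with x
    rw [Real.norm_of_nonneg (mul_nonneg (hf0 x) (hg0 x))]
    simp only [Pi.add_apply]
    nlinarith [sq_nonneg (f x - g x)]
  have hA0 : 0 ≤ A := integral_nonneg fun x => sq_nonneg _
  have hB0 : 0 ≤ B := integral_nonneg fun x => sq_nonneg _
  have hC0 : 0 ≤ C := integral_nonneg fun x => mul_nonneg (hf0 x) (hg0 x)
  have key : ∀ ε : ℝ, 0 < ε → 2 * C ≤ ε * A + B / ε := by
    intro ε hε
    have h1 : ∀ x, 2 * (f x * g x) ≤ ε * f x ^ 2 + g x ^ 2 / ε := by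
      intro x
      have h2 : 0 ≤ (ε * f x - g x) ^ 2 / ε := div_nonneg (sq_nonneg _) hε.le
      have h3 : ε * f x ^ 2 + g x ^ 2 / ε - 2 * (f x * g x) = (ε * f x - g x) ^ 2 / ε := by
        field_simp
        ring
      linarith
    calc 2 * C = ∫ x, 2 * (f x * g x) ∂ν := by rw [integral_const_mul]
      _ ≤ ∫ x, (ε * f x ^ 2 + g x ^ 2 / ε) ∂ν := by
          exact integral_mono (hfg.const_mul 2) ((hf2.const_mul ε).add (hg2.div_const ε)) h1
      _ = ε * A + B / ε := by
          rw [integral_add (hf2.const_mul ε) (hg2.div_const ε), integral_const_mul,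
            integral_div]
  rcases eq_or_lt_of_le hA0 with hA0' | hApos
  · -- A = 0 : show C = 0
    have hCz : C ≤ 0 := by
      by_contra h
      push_neg at h
      have := key (B / C + 1) (by positivity)
      rw [← hA0'] at this
      have hBC : B / (B / C + 1) < C := by
        rw [div_lt_iff₀ (by positivity)]
        nlinarith [div_nonneg hB0 h.le, mul_div_cancel₀ B (ne_of_gt h)]
      nlinarith
    have : C = 0 := le_antisymm hCz hC0
    simp [this]
    positivity
  · rcases eq_or_lt_of_le hB0 with hB0' | hBpos
    · have hCz : C ≤ 0 := by
        by_contra h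
        push_neg at h
        have := key (C / A) (by positivity)
        rw [← hB0'] at this
        rw [div_mul_cancel₀ _ (ne_of_gt hApos), zero_div] at this
        linarith
      have : C = 0 := le_antisymm hCz hC0
      simp [this]
      positivity
    · have hε : (0:ℝ) < Real.sqrt (B / A) := Real.sqrt_pos.mpr (by positivity)
      have := key _ hε
      have hsa : Real.sqrt A ^ 2 = A := Real.sq_sqrt hA0
      have hsb : Real.sqrt B ^ 2 = B := Real.sq_sqrt hB0
      have hsa0 : 0 < Real.sqrt A := Real.sqrt_pos.mpr hApos
      have hsb0 : 0 < Real.sqrt B := Real.sqrt_pos.mpr hBpos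
      have hd : Real.sqrt (B / A) = Real.sqrt B / Real.sqrt A := Real.sqrt_div hB0 A
      rw [hd] at this
      have h1 : Real.sqrt B / Real.sqrt A * A = Real.sqrt A * Real.sqrt B := by
        field_simp; nlinarith [hsa]
      have h2 : B / (Real.sqrt B / Real.sqrt A) = Real.sqrt A * Real.sqrt B := by
        field_simp; nlinarith [hsb]
      rw [h1, h2] at this
      nlinarith


lemma radial_integral {s : ℝ} (hs : 1 < s) :
    ∫ r in (0:ℝ)..1, r * (2 * Real.pi * (r ^ 2 + s) / (s - r ^ 2) ^ 3)
      = Real.pi / (s - 1) ^ 2 := by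
  have key : ∀ r ∈ Set.uIcc (0:ℝ) 1,
      HasDerivAt (fun r : ℝ => Real.pi * r ^ 2 / (s - r ^ 2) ^ 2)
        (r * (2 * Real.pi * (r ^ 2 + s) / (s - r ^ 2) ^ 3)) r := by
    intro r hr
    rw [Set.uIcc_of_le (by norm_num)] at hr
    have hner : (s - r ^ 2) ≠ 0 := by nlinarith [hr.1, hr.2]
    have h1 : HasDerivAt (fun r : ℝ => Real.pi * r ^ 2) (Real.pi * (2 * r)) r := by
      simpa using ((hasDerivAt_pow 2 r).const_mul Real.pi)
    have h2 : HasDerivAt (fun r : ℝ => (s - r ^ 2) ^ 2) (2 * (s - r ^ 2) * (-(2 * r))) r := by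
      have hb : HasDerivAt (fun r : ℝ => s - r ^ 2) (-(2 * r)) r := by
        simpa using ((hasDerivAt_pow 2 r).const_sub s)
      simpa [pow_one] using (hb.fun_pow 2)
    have := h1.div h2 (pow_ne_zero 2 hner)
    refine this.congr_deriv ?_
    field_simp
    ring
  have hcont : ContinuousOn (fun r : ℝ => r * (2 * Real.pi * (r ^ 2 + s) / (s - r ^ 2) ^ 3))
      (Set.uIcc (0:ℝ) 1) := by
    rw [Set.uIcc_of_le (by norm_num)]
    refine ContinuousOn.mul continuousOn_id ?_
    refine ContinuousOn.div (by fun_prop) (by fun_prop) ?_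
    intro r hr
    have : (s - r ^ 2) ≠ 0 := by nlinarith [hr.1, hr.2]
    positivity
  rw [intervalIntegral.integral_eq_sub_of_hasDerivAt key (hcont.intervalIntegrable)]
  have h1 : s - 1 ≠ 0 := by nlinarith
  field_simp
  simp


lemma circle_lemma {z : ℂ} (hz : 1 < ‖z‖) {r : ℝ} (hr0 : 0 < r) (hr1 : r < 1) :
    ∫ θ in (0:ℝ)..(2 * Real.pi), ((‖circleMap 0 r θ - z‖) ^ 4)⁻¹
      = 2 * Real.pi * (r ^ 2 + ‖z‖ ^ 2) / (‖z‖ ^ 2 - r ^ 2) ^ 3 := by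
  set s : ℝ := ‖z‖ ^ 2 with hs
  set zb : ℂ := (starRingEnd ℂ) z with hzb
  have hz0 : z ≠ 0 := by
    intro h; rw [h] at hz; simp at hz; linarith
  have hzb0 : zb ≠ 0 := by simp [hzb, hz0]
  have hzz : z * zb = (s : ℂ) := by
    rw [hzb, Complex.mul_conj, hs]
    norm_cast
    rw [Complex.normSq_eq_norm_sq]
  have hrz : r < ‖z‖ := lt_trans hr1 hz
  set w₀ : ℂ := (r : ℂ) ^ 2 / zb with hw₀def
  have habsw₀ : ‖w₀‖ < r := by
    rw [hw₀def, norm_div, norm_pow]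
    simp only [Complex.norm_real, Real.norm_of_nonneg hr0.le, abs_of_pos hr0, hzb, Complex.norm_conj]
    rw [div_lt_iff₀ (by linarith)]
    nlinarith
  set f : ℂ → ℂ := fun w => w / (zb ^ 2 * (w - z) ^ 2) with hf
  have hsub : closedBall (0:ℂ) r ⊆ ball (0:ℂ) (‖z‖) :=
    closedBall_subset_ball hrz
  have hdiff : DifferentiableOn ℂ f (ball (0:ℂ) (‖z‖)) := by
    apply DifferentiableOn.div differentiableOn_id
    · exact (differentiableOn_const _).mul (((differentiableOn_id).sub
        (differentiableOn_const z)).pow 2)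
    · intro w hw
      simp only [mem_ball, dist_zero_right] at hw
      have hwz : w - z ≠ 0 := by
        intro h
        rw [sub_eq_zero] at h
        rw [h] at hw
        exact lt_irrefl _ hw
      exact mul_ne_zero (pow_ne_zero 2 hzb0) (pow_ne_zero 2 hwz)
  have hw₀mem : w₀ ∈ ball (0:ℂ) r := by
    simpa [mem_ball, dist_zero_right] using habsw₀
  have key := two_pi_I_inv_smul_circleIntegral_sub_sq_inv_smul_of_differentiable
    isOpen_ball hsub hdiff hw₀mem
  -- nonvanishing facts
  have hw₀z : w₀ - z ≠ 0 := by
    intro h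
    rw [sub_eq_zero] at h
    rw [h] at habsw₀
    linarith
  have hden : zb ^ 2 * (w₀ - z) ^ 2 ≠ 0 :=
    mul_ne_zero (pow_ne_zero 2 hzb0) (pow_ne_zero 2 hw₀z)
  have hsr' : (r:ℂ) ^ 2 - z * zb ≠ 0 := by
    rw [hzz]
    intro h
    rw [sub_eq_zero] at h
    have : r ^ 2 = s := by exact_mod_cast h
    nlinarith
  have hderiv : HasDerivAt f
      ((1 * (zb ^ 2 * (w₀ - z) ^ 2) - w₀ * (zb ^ 2 * (2 * (w₀ - z) ^ 1 * 1))) /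
        (zb ^ 2 * (w₀ - z) ^ 2) ^ 2) w₀ := by
    apply HasDerivAt.div (hasDerivAt_id w₀)
    · exact (((hasDerivAt_id w₀).sub_const z).pow 2).const_mul (zb ^ 2)
    · exact hden
  have hderiv_val : deriv f w₀ = (((r ^ 2 + s) / (s - r ^ 2) ^ 3 : ℝ) : ℂ) := by
    rw [hderiv.deriv]
    have e : w₀ - z = ((r:ℂ) ^ 2 - z * zb) / zb := by
      rw [hw₀def]; field_simp
    have hsr2 : z * zb - (r:ℂ) ^ 2 ≠ 0 := by
      intro h; apply hsr'; rw [← neg_sub] at h; simpa using neg_eq_zero.mp h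
    rw [e, hw₀def]
    push_cast
    rw [← hzz]
    rw [div_eq_div_iff (pow_ne_zero 2 (mul_ne_zero (pow_ne_zero 2 hzb0)
      (pow_ne_zero 2 (div_ne_zero hsr' hzb0)))) (pow_ne_zero 3 hsr2)]
    field_simp
    ring
  rw [hderiv_val] at key
  -- the integrand over the circle
  have hptwise : ∀ θ : ℝ,
      deriv (circleMap 0 r) θ • (((circleMap 0 r θ - w₀) ^ 2)⁻¹ • f (circleMap 0 r θ))
        = Complex.I * ((((‖circleMap 0 r θ - z‖) ^ 4)⁻¹ : ℝ) : ℂ) := by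
    intro θ
    have habsw : ‖circleMap 0 r θ‖ = r := by
      simp [norm_circleMap_zero, abs_of_pos hr0]
    set w : ℂ := circleMap 0 r θ with hw
    have hw0 : w ≠ 0 := by
      intro h; rw [h] at habsw; simp at habsw; linarith
    have hwz : w - z ≠ 0 := by
      intro h; rw [sub_eq_zero] at h; rw [h] at habsw; linarith
    have hww₀ : w - w₀ ≠ 0 := by
      intro h; rw [sub_eq_zero] at h
      rw [← h] at habsw₀
      rw [habsw] at habsw₀
      exact lt_irrefl r habsw₀
    have hcw : (starRingEnd ℂ) w = (r:ℂ) ^ 2 / w := by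
      rw [eq_div_iff hw0, mul_comm, Complex.mul_conj]
      norm_cast
      rw [Complex.normSq_eq_norm_sq, habsw]
    have h2 : ((‖w - z‖ ^ 2 : ℝ) : ℂ) = (w - z) * ((starRingEnd ℂ) w - zb) := by
      rw [← Complex.normSq_eq_norm_sq, ← Complex.mul_conj, map_sub, ← hzb]
    have habs4 : (((‖w - z‖) ^ 4 : ℝ) : ℂ)
        = ((w - z) * ((starRingEnd ℂ) w - zb)) ^ 2 := by
      rw [← h2]; push_cast; ring
    have hnum : zb * w - (r:ℂ) ^ 2 ≠ 0 := by
      intro h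
      apply hww₀
      rw [sub_eq_zero] at h
      rw [hw₀def, sub_eq_zero, eq_div_iff hzb0, mul_comm, h]
    have hinv : ((((‖w - z‖) ^ 4)⁻¹ : ℝ) : ℂ)
        = ((((‖w - z‖) ^ 4 : ℝ) : ℂ))⁻¹ := by push_cast; ring
    rw [deriv_circleMap, ← hw, smul_eq_mul, smul_eq_mul, hinv, habs4, hcw, hw₀def]
    have e1 : (r:ℂ) ^ 2 / w - zb = ((r:ℂ) ^ 2 - zb * w) / w := by field_simp
    have e2 : w - (r:ℂ) ^ 2 / zb = (zb * w - (r:ℂ) ^ 2) / zb := by field_simp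
    have hnum2 : (r:ℂ) ^ 2 - zb * w ≠ 0 := by
      intro h; apply hnum; rw [← neg_sub] at h
      simpa using neg_eq_zero.mp h
    rw [e1, e2, hf]
    field_simp
    ring
  have hcirc : (∮ w in C(0, r), ((w - w₀) ^ 2)⁻¹ • f w)
      = Complex.I * ((∫ θ in (0:ℝ)..(2 * Real.pi),
          ((‖circleMap 0 r θ - z‖) ^ 4)⁻¹ : ℝ) : ℂ) := by
    rw [circleIntegral]
    rw [intervalIntegral.integral_congr (g := fun θ : ℝ =>
      Complex.I * ((((‖circleMap 0 r θ - z‖) ^ 4)⁻¹ : ℝ) : ℂ))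
      (fun θ _ => hptwise θ)]
    rw [intervalIntegral.integral_const_mul, intervalIntegral.integral_ofReal]
  rw [hcirc, smul_eq_mul] at key
  have hpi : (Real.pi : ℂ) ≠ 0 := by
    exact_mod_cast Real.pi_ne_zero
  have h2pI : (2 * (Real.pi : ℂ) * Complex.I) ≠ 0 := by
    simp [hpi, Complex.I_ne_zero]
  rw [inv_mul_eq_iff_eq_mul₀ h2pI] at key
  have key2 : ((∫ θ in (0:ℝ)..(2 * Real.pi),
      ((‖circleMap 0 r θ - z‖) ^ 4)⁻¹ : ℝ) : ℂ)
      = ((2 * Real.pi * ((r ^ 2 + s) / (s - r ^ 2) ^ 3) : ℝ) : ℂ) := by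
    have := key
    push_cast
    apply mul_left_cancel₀ Complex.I_ne_zero
    rw [this]
    push_cast
    ring
  have : (∫ θ in (0:ℝ)..(2 * Real.pi), ((‖circleMap 0 r θ - z‖) ^ 4)⁻¹)
      = 2 * Real.pi * ((r ^ 2 + s) / (s - r ^ 2) ^ 3) := by exact_mod_cast key2
  rw [this]
  ring



lemma disk_integral {z : ℂ} (hz : 1 < ‖z‖) :
    ∫ w in {w : ℂ | ‖w‖ < 1}, ((‖w - z‖) ^ 4)⁻¹
      = Real.pi / (‖z‖ ^ 2 - 1) ^ 2 := by
  set s : ℝ := ‖z‖ ^ 2 with hs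
  have hs1 : 1 < s := by nlinarith
  set D : Set ℂ := {w : ℂ | ‖w‖ < 1} with hD
  set f : ℂ → ℝ := fun w => ((‖w - z‖) ^ 4)⁻¹ with hf
  have hDmeas : MeasurableSet D := by
    have : D = Metric.ball (0:ℂ) 1 := by
      ext w; simp [hD, Metric.mem_ball, Complex.dist_eq]
    rw [this]; exact measurableSet_ball
  have hfmeas : Measurable f := by
    have : Continuous (fun w : ℂ => (‖w - z‖) ^ 4) := by continuity
    exact this.measurable.inv
  -- helper: polarCoord.symm is circleMap
  have hpc : ∀ p : ℝ × ℝ, Complex.polarCoord.symm p = circleMap 0 p.1 p.2 := by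
    intro p
    rw [Complex.polarCoord_symm_apply]
    simp [circleMap, Complex.exp_mul_I]
  -- the bound on f inside the unit disk-ish region
  have hflb : ∀ w : ℂ, ‖w‖ ≤ 1 → ‖f w‖ ≤ ((‖z‖ - 1) ^ 4)⁻¹ := by
    intro w hw
    have h1 : ‖z‖ - 1 ≤ ‖w - z‖ := by
      have h2 := norm_sub_norm_le z w
      rw [norm_sub_rev] at h2
      linarith
    have hpos : (0:ℝ) < ‖z‖ - 1 := by linarith
    rw [hf, Real.norm_of_nonneg (by positivity)]
    apply inv_anti₀ (by positivity)
    exact pow_le_pow_left₀ hpos.le h1 4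
  set G : ℝ × ℝ → ℝ := fun p => p.1 * f (circleMap 0 p.1 p.2) with hG
  set S : Set (ℝ × ℝ) := Ioo (0:ℝ) 1 ×ˢ Ioo (-Real.pi) Real.pi with hSdef
  have hSmeas : MeasurableSet S := measurableSet_Ioo.prod measurableSet_Ioo
  have hGmeas : Measurable G := by
    have hc : Continuous (fun p : ℝ × ℝ => circleMap 0 p.1 p.2) := by
      simp only [circleMap]
      continuity
    have : Continuous (fun p : ℝ × ℝ => (‖circleMap 0 p.1 p.2 - z‖) ^ 4) := by
      continuity
    exact measurable_fst.mul this.measurable.inv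
  have hGint : IntegrableOn G S := by
    have hSfin : volume S < ⊤ := by
      rw [hSdef, Measure.volume_eq_prod ℝ ℝ, Measure.prod_prod]
      exact ENNReal.mul_lt_top measure_Ioo_lt_top measure_Ioo_lt_top
    refine Integrable.mono' ((integrableOn_const hSfin.ne) :
        IntegrableOn (fun _ => ((‖z‖ - 1) ^ 4)⁻¹) S volume)
      hGmeas.aestronglyMeasurable ?_
    rw [ae_restrict_iff' hSmeas]
    filter_upwards with p hp
    obtain ⟨hp1, hp2⟩ := hp
    have h1 : ‖circleMap 0 p.1 p.2‖ ≤ 1 := by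
      rw [norm_circleMap_zero, abs_of_pos hp1.1]
      exact hp1.2.le
    have hb := hflb _ h1
    rw [hG]
    simp only [Real.norm_eq_abs, abs_mul, abs_of_pos hp1.1]
    calc p.1 * |f (circleMap 0 p.1 p.2)| ≤ 1 * ((‖z‖ - 1) ^ 4)⁻¹ := by
          apply mul_le_mul hp1.2.le _ (abs_nonneg _) zero_le_one
          simpa using hb
      _ = ((‖z‖ - 1) ^ 4)⁻¹ := one_mul _
  have hinner : ∀ r ∈ Ioo (0:ℝ) 1,
      (∫ θ in Ioo (-Real.pi) Real.pi, G (r, θ))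
        = r * (2 * Real.pi * (r ^ 2 + s) / (s - r ^ 2) ^ 3) := by
    intro r hr
    have h1 : (∫ θ in Ioo (-Real.pi) Real.pi, G (r, θ))
        = ∫ θ in (-Real.pi)..Real.pi, G (r, θ) := by
      rw [intervalIntegral.integral_of_le (by linarith [Real.pi_pos])]
      exact setIntegral_congr_set Ioo_ae_eq_Ioc
    rw [h1, hG]
    simp only
    rw [intervalIntegral.integral_const_mul]
    have hper : Function.Periodic (fun θ => f (circleMap 0 r θ)) (2 * Real.pi) :=
      (periodic_circleMap 0 r).comp f
    have h2 := hper.intervalIntegral_add_eq (-Real.pi) 0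
    rw [zero_add] at h2
    have h3 : -Real.pi + 2 * Real.pi = Real.pi := by ring
    rw [h3] at h2
    rw [h2, hf]
    rw [circle_lemma hz hr.1 hr.2]
  calc ∫ w in D, f w
      = ∫ w, D.indicator f w := (integral_indicator hDmeas).symm
    _ = ∫ p in Complex.polarCoord.target, p.1 • D.indicator f (Complex.polarCoord.symm p) :=
        (Complex.integral_comp_polarCoord_symm (D.indicator f)).symm
    _ = ∫ p in S, p.1 • D.indicator f (Complex.polarCoord.symm p) := by
        rw [Complex.polarCoord_target]
        apply setIntegral_eq_of_subset_of_forall_diff_eq_zero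
          (measurableSet_Ioi.prod measurableSet_Ioo)
        · rintro ⟨p1, p2⟩ ⟨h1, h2⟩
          exact ⟨h1.1, h2⟩
        · rintro ⟨p1, p2⟩ ⟨⟨h1, h2⟩, hns⟩
          have hp1 : (1:ℝ) ≤ p1 := by
            by_contra hlt
            push_neg at hlt
            exact hns ⟨⟨h1, hlt⟩, h2⟩
          have : Complex.polarCoord.symm (p1, p2) ∉ D := by
            simp only [hD, Set.mem_setOf_eq, not_lt]
            rw [Complex.norm_polarCoord_symm]
            simp only
            rw [abs_of_pos (Set.mem_Ioi.mp h1)]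
            exact hp1
          rw [Set.indicator_of_notMem this]
          simp
    _ = ∫ p in S, G p := by
        apply setIntegral_congr_fun hSmeas
        rintro ⟨p1, p2⟩ ⟨h1, h2⟩
        have hmem : Complex.polarCoord.symm (p1, p2) ∈ D := by
          simp only [hD, Set.mem_setOf_eq]
          rw [Complex.norm_polarCoord_symm]
          simp only
          rw [abs_of_pos h1.1]
          exact h1.2
        simp only [Set.indicator_of_mem hmem, smul_eq_mul, hG]
        rw [hpc (p1, p2)]
    _ = ∫ r in Ioo (0:ℝ) 1, ∫ θ in Ioo (-Real.pi) Real.pi, G (r, θ) := by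
        rw [hSdef] at hGint ⊢
        rw [Measure.volume_eq_prod ℝ ℝ] at hGint ⊢
        exact setIntegral_prod G hGint
    _ = ∫ r in Ioo (0:ℝ) 1, r * (2 * Real.pi * (r ^ 2 + s) / (s - r ^ 2) ^ 3) :=
        setIntegral_congr_fun measurableSet_Ioo hinner
    _ = ∫ r in (0:ℝ)..1, r * (2 * Real.pi * (r ^ 2 + s) / (s - r ^ 2) ^ 3) := by
        rw [intervalIntegral.integral_of_le zero_le_one]
        exact setIntegral_congr_set Ioo_ae_eq_Ioc
    _ = Real.pi / (s - 1) ^ 2 := radial_integral hs1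


theorem pointwise_estimate_Bers_projection_derivative
    (μ : ℂ → ℂ) (hmeas : Measurable μ)
    (hbdd : eLpNorm μ ⊤ (volume.restrict {w : ℂ | ‖w‖ < 1}) < ⊤)
    (φ : ℂ → ℂ)
    (hφ : ∀ z : ℂ, 1 < ‖z‖ →
      φ z = -(6 / (Real.pi : ℂ)) * ∫ w in {w : ℂ | ‖w‖ < 1}, μ w / (w - z) ^ 4)
    (z : ℂ) (hz : 1 < ‖z‖) :
    ‖φ z‖ ^ 2 * (‖z‖ ^ 2 - 1) ^ 3 ≤
      (36 / Real.pi) * (‖z‖ ^ 2 - 1) *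
        ∫ w in {w : ℂ | ‖w‖ < 1},
          ‖μ w‖ ^ 2 / ‖w - z‖ ^ 4 := by
  have hπ : (0:ℝ) < Real.pi := Real.pi_pos
  set D : Set ℂ := {w : ℂ | ‖w‖ < 1} with hD
  set ν : Measure ℂ := volume.restrict D with hν
  have hDmeas : MeasurableSet D := by
    have : D = Metric.ball (0:ℂ) 1 := by
      ext w; simp [hD, Metric.mem_ball, Complex.dist_eq]
    rw [this]; exact measurableSet_ball
  have hDfin : volume D < ⊤ := by
    have : D = Metric.ball (0:ℂ) 1 := by
      ext w; simp [hD, Metric.mem_ball, Complex.dist_eq]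
    rw [this]; exact measure_ball_lt_top
  set s : ℝ := ‖z‖ ^ 2 with hs
  have hs1 : 1 < s := by nlinarith
  set f : ℂ → ℝ := fun w => ‖μ w‖ * ((‖w - z‖) ^ 2)⁻¹ with hf
  set g : ℂ → ℝ := fun w => ((‖w - z‖) ^ 2)⁻¹ with hg
  have hf0 : ∀ w, 0 ≤ f w := fun w => by positivity
  have hg0 : ∀ w, 0 ≤ g w := fun w => by positivity
  -- distance bound on the disk
  have hdist : ∀ w ∈ D, ‖z‖ - 1 ≤ ‖w - z‖ := by
    intro w hw
    have h2 := norm_sub_norm_le z w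
    rw [norm_sub_rev] at h2
    have : ‖w‖ < 1 := hw
    linarith
  have hz1 : (0:ℝ) < ‖z‖ - 1 := by linarith
  -- a.e. bound for μ on D
  set C : ℝ := (eLpNorm μ ⊤ ν).toReal with hC
  have hbound : ∀ᵐ w ∂ν, ‖μ w‖ ≤ C := by
    have h1 : ∀ᵐ w ∂ν, (‖μ w‖₊ : ENNReal) ≤ eLpNormEssSup μ ν := ae_le_eLpNormEssSup
    rw [eLpNorm_exponent_top] at hbdd
    filter_upwards [h1] with w hw
    have := ENNReal.toReal_mono hbdd.ne hw
    simpa [hC, eLpNorm_exponent_top] using this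
  -- measurability
  have hfm : Measurable f := by
    have h1 : Measurable (fun w => ‖μ w‖) :=
      continuous_norm.measurable.comp hmeas
    have h2 : Measurable (fun w : ℂ => ((‖w - z‖) ^ 2)⁻¹) := by
      have : Continuous (fun w : ℂ => (‖w - z‖) ^ 2) := by continuity
      exact this.measurable.inv
    exact h1.mul h2
  have hgm : Measurable g := by
    have : Continuous (fun w : ℂ => (‖w - z‖) ^ 2) := by continuity
    exact this.measurable.inv
  -- integrability of f^2 and g^2
  have hgb : ∀ w ∈ D, g w ≤ ((‖z‖ - 1) ^ 2)⁻¹ := by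
    intro w hw
    apply inv_anti₀ (by positivity)
    exact pow_le_pow_left₀ hz1.le (hdist w hw) 2
  have hg2 : Integrable (fun w => g w ^ 2) ν := by
    refine Integrable.mono' ((integrableOn_const hDfin.ne) :
        IntegrableOn (fun _ => (((‖z‖ - 1) ^ 2)⁻¹) ^ 2) D volume)
      (hgm.pow_const 2).aestronglyMeasurable ?_
    rw [hν, ae_restrict_iff' hDmeas]
    filter_upwards with w hw
    rw [Real.norm_of_nonneg (by positivity)]
    exact pow_le_pow_left₀ (hg0 w) (hgb w hw) 2
  have hf2 : Integrable (fun w => f w ^ 2) ν := by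
    refine Integrable.mono' (hg2.const_mul (C ^ 2))
      (hfm.pow_const 2).aestronglyMeasurable ?_
    filter_upwards [hbound] with w hw
    rw [Real.norm_of_nonneg (by positivity), hf]
    simp only [mul_pow]
    have h0 : (0:ℝ) ≤ ‖μ w‖ := by positivity
    have h1 : ‖μ w‖ ^ 2 ≤ C ^ 2 := by nlinarith
    have hgg : (0:ℝ) ≤ (((‖w - z‖) ^ 2)⁻¹) ^ 2 := by positivity
    calc ‖μ w‖ ^ 2 * (((‖w - z‖) ^ 2)⁻¹) ^ 2
        ≤ C ^ 2 * (((‖w - z‖) ^ 2)⁻¹) ^ 2 :=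
          mul_le_mul_of_nonneg_right h1 hgg
      _ = C ^ 2 * g w ^ 2 := by rw [hg]
  -- Cauchy-Schwarz
  have hCS := my_cauchy_schwarz ν f g hfm.aestronglyMeasurable hgm.aestronglyMeasurable
    hf0 hg0 hf2 hg2
  -- identify ∫ g^2 with the disk integral
  have hB : (∫ w, g w ^ 2 ∂ν) = Real.pi / (s - 1) ^ 2 := by
    have h1 : (∫ w, g w ^ 2 ∂ν) = ∫ w in D, ((‖w - z‖) ^ 4)⁻¹ := by
      rw [hν]
      apply setIntegral_congr_fun hDmeas
      intro w _
      rw [hg]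
      simp only
      rw [← inv_pow, ← pow_mul, inv_pow]
    rw [h1, hD]
    exact disk_integral hz
  -- identify ∫ f^2 with the RHS integral
  have hA : (∫ w, f w ^ 2 ∂ν)
      = ∫ w in D, ‖μ w‖ ^ 2 / ‖w - z‖ ^ 4 := by
    rw [hν]
    apply setIntegral_congr_fun hDmeas
    intro w _
    rw [hf]
    simp only
    rw [mul_pow, ← inv_pow, ← pow_mul, inv_pow, div_eq_mul_inv]
  set A : ℝ := ∫ w in D, ‖μ w‖ ^ 2 / ‖w - z‖ ^ 4 with hAdef
  rw [hA, hB] at hCS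
  have hA0 : 0 ≤ A := by
    rw [hAdef]
    apply setIntegral_nonneg hDmeas
    intro w _
    positivity
  -- bound |φ z|
  have hφ1 : ‖φ z‖ ≤ (6 / Real.pi) * ∫ w, f w * g w ∂ν := by
    rw [hφ z hz]
    rw [norm_mul]
    have he1 : ‖-(6 / (Real.pi : ℂ))‖ = 6 / Real.pi := by
      rw [norm_neg, norm_div]
      simp [Complex.norm_real, abs_of_pos hπ]
    rw [he1]
    apply mul_le_mul_of_nonneg_left _ (by positivity)
    calc ‖∫ w in D, μ w / (w - z) ^ 4‖
        ≤ ∫ w in D, ‖μ w / (w - z) ^ 4‖ := by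
          exact norm_integral_le_integral_norm _
      _ = ∫ w, f w * g w ∂ν := by
          rw [hν]
          apply setIntegral_congr_fun hDmeas
          intro w _
          simp only [hf, hg, norm_div, norm_pow]
          rw [div_eq_mul_inv, mul_assoc, ← mul_inv, ← pow_add]
  have hfg0 : (0:ℝ) ≤ ∫ w, f w * g w ∂ν :=
    integral_nonneg fun w => mul_nonneg (hf0 w) (hg0 w)
  have hφ2 : ‖φ z‖ ^ 2 ≤ (6 / Real.pi) ^ 2 * (A * (Real.pi / (s - 1) ^ 2)) := by
    calc ‖φ z‖ ^ 2
        ≤ ((6 / Real.pi) * ∫ w, f w * g w ∂ν) ^ 2 :=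
          pow_le_pow_left₀ (norm_nonneg _) hφ1 2
      _ = (6 / Real.pi) ^ 2 * (∫ w, f w * g w ∂ν) ^ 2 := by ring
      _ ≤ (6 / Real.pi) ^ 2 * (A * (Real.pi / (s - 1) ^ 2)) := by
          apply mul_le_mul_of_nonneg_left hCS (by positivity)
  have hsm1 : (0:ℝ) < s - 1 := by linarith
  calc ‖φ z‖ ^ 2 * (‖z‖ ^ 2 - 1) ^ 3
      ≤ ((6 / Real.pi) ^ 2 * (A * (Real.pi / (s - 1) ^ 2))) * (s - 1) ^ 3 := by
        apply mul_le_mul_of_nonneg_right hφ2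
        apply pow_nonneg
        nlinarith [norm_nonneg z]
    _ = (36 / Real.pi) * (s - 1) * A := by
        field_simp
        ring
    _ = (36 / Real.pi) * (‖z‖ ^ 2 - 1) *
        ∫ w in {w : ℂ | ‖w‖ < 1},
          ‖μ w‖ ^ 2 / ‖w - z‖ ^ 4 := by rw [hs, hAdef, hD]
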